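/- Let Φ : 𝔻 → M_n(ℂ) be holomorphic and suppose that for every R ∈ (0,1), r(Φ(ζ)) < 1/R whenever |ζ| = R. Then r(Φ(ζ)) ≤ 1 for all ζ ∈ 𝔻. -/

import Mathlib

open Metric

section Auxiliary

open Matrix Polynomial Finset Filter Topology Complex

private lemma mprodNeg (s : Multiset ℂ) (f : ℂ → ℂ) :
    (s.map fun x => -(f x)).prod = (-1) ^ Multiset.card s * (s.map f).prod := by
  have h : (s.map fun x => (-1 : ℂ) * f x).prod
      = (s.map fun _ => (-1 : ℂ)).prod * (s.map f).prod := Multiset.prod_map_mul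
  simpa [Multiset.map_const', Multiset.prod_replicate, neg_mul] using h

private lemma charpolyEval {n : ℕ} (A : Matrix (Fin n) (Fin n) ℂ) (μ : ℂ) :
    (A.charpoly).eval μ = (Matrix.scalar (Fin n) μ - A).det := by
  rw [Matrix.charpoly, ← coe_evalRingHom, RingHom.map_det]
  congr 1
  ext i j
  by_cases h : i = j <;> simp [charmatrix_apply, h, Matrix.scalar, Matrix.one_apply]

private lemma charpolyEval' {n : ℕ} (A : Matrix (Fin n) (Fin n) ℂ) (μ : ℂ) :
    (A.charpoly).eval μ = (A.charpoly.roots.map fun ν => μ - ν).prod := by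
  conv_lhs => rw [(IsAlgClosed.splits A.charpoly).eq_prod_roots_of_monic A.charpoly_monic]
  rw [Polynomial.eval_multiset_prod, Multiset.map_map]
  simp

private lemma cardRootsCharpoly {n : ℕ} (A : Matrix (Fin n) (Fin n) ℂ) :
    Multiset.card A.charpoly.roots = n := by
  rw [(Polynomial.splits_iff_card_roots).1 (IsAlgClosed.splits _),
    A.charpoly_natDegree_eq_dim, Fintype.card_fin]

private lemma memSpectrumIffRoot {n : ℕ} (A : Matrix (Fin n) (Fin n) ℂ) (μ : ℂ) :
    μ ∈ spectrum ℂ A ↔ μ ∈ A.charpoly.roots := by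
  rw [spectrum.mem_iff, Polynomial.mem_roots A.charpoly_monic.ne_zero, Polynomial.IsRoot,
    charpolyEval]
  constructor
  · intro h
    by_contra hdet
    exact h ((Matrix.isUnit_iff_isUnit_det _).2 (Ne.isUnit hdet))
  · intro h hu
    rw [Matrix.isUnit_iff_isUnit_det] at hu
    exact hu.ne_zero h

private lemma spectrumFinite {n : ℕ} (A : Matrix (Fin n) (Fin n) ℂ) :
    (spectrum ℂ A).Finite := by
  apply Set.Finite.subset (A.charpoly.roots.toFinset : Finset ℂ).finite_toSet
  intro μ hμ
  simpa [Multiset.mem_toFinset] using (memSpectrumIffRoot A μ).1 hμ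

private lemma detPowSubScalar {n : ℕ} (A : Matrix (Fin n) (Fin n) ℂ) {k : ℕ} (hk : k ≠ 0)
    (y : ℂ) :
    (Matrix.scalar (Fin n) y - A ^ k).det = (A.charpoly.roots.map fun μ => y - μ ^ k).prod := by
  classical
  set φ : Polynomial ℂ →* ℂ :=
    (Matrix.detMonoidHom).comp ((Polynomial.aeval A).toRingHom.toMonoidHom) with hφ
  have hφ' : ∀ p : Polynomial ℂ, φ p = (Polynomial.aeval A p).det := fun p => rfl
  set q : Polynomial ℂ := X ^ k - C y with hq
  have hqm : q.Monic := monic_X_pow_sub_C y hk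
  have hqc : Multiset.card q.roots = k := by
    rw [(Polynomial.splits_iff_card_roots).1 (IsAlgClosed.splits _), hq,
      natDegree_X_pow_sub_C]
  have hqe : q = (q.roots.map fun a => X - C a).prod :=
    (IsAlgClosed.splits q).eq_prod_roots_of_monic hqm
  have hqev : ∀ μ : ℂ, (q.roots.map fun ζ => μ - ζ).prod = μ ^ k - y := by
    intro μ
    have : q.eval μ = ((q.roots.map fun a => X - C a).prod).eval μ := by rw [← hqe]
    rw [Polynomial.eval_multiset_prod, Multiset.map_map] at this
    simpa [hq] using this.symm
  have h1 : (A ^ k - Matrix.scalar (Fin n) y).det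
      = (q.roots.map fun ζ => (A - Matrix.scalar (Fin n) ζ).det).prod := by
    have hA : (A ^ k - Matrix.scalar (Fin n) y) = Polynomial.aeval A q := by
      simp [hq, Matrix.scalar]
      rfl
    rw [hA, ← hφ' q]
    conv_lhs => rw [hqe]
    rw [map_multiset_prod, Multiset.map_map]
    congr 1
    ext ζ
    simp [hφ', Matrix.scalar]
    rfl
  have h2 : ∀ ζ : ℂ, (A - Matrix.scalar (Fin n) ζ).det
      = (-1 : ℂ) ^ n * (A.charpoly.roots.map fun μ => ζ - μ).prod := by
    intro ζ
    have : (A - Matrix.scalar (Fin n) ζ) = -(Matrix.scalar (Fin n) ζ - A) := (neg_sub _ _).symm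
    rw [this, Matrix.det_neg, ← charpolyEval, charpolyEval']
    simp
  have h3 : (Matrix.scalar (Fin n) y - A ^ k) = -(A ^ k - Matrix.scalar (Fin n) y) :=
    (neg_sub _ _).symm
  rw [h3, Matrix.det_neg, h1]
  simp only [h2]
  rw [Multiset.prod_map_mul (f := fun _ => (-1 : ℂ) ^ n)
    (g := fun ζ => (A.charpoly.roots.map fun μ => ζ - μ).prod)]
  rw [Multiset.map_const', Multiset.prod_replicate, hqc]
  rw [Multiset.prod_map_prod_map]
  have h4 : (A.charpoly.roots.map fun μ => (q.roots.map fun ζ => ζ - μ).prod).prod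
      = ((-1 : ℂ) ^ k) ^ n * (A.charpoly.roots.map fun μ => μ ^ k - y).prod := by
    have hinner : ∀ μ : ℂ, (q.roots.map fun ζ => ζ - μ).prod = (-1 : ℂ) ^ k * (μ ^ k - y) := by
      intro μ
      have := mprodNeg q.roots (fun ζ => μ - ζ)
      simp only [neg_sub] at this
      rw [this, hqc, hqev]
    simp only [hinner]
    rw [Multiset.prod_map_mul (f := fun _ => (-1 : ℂ) ^ k) (g := fun μ => μ ^ k - y),
      Multiset.map_const', Multiset.prod_replicate, cardRootsCharpoly]
  rw [h4]
  have h5 : (A.charpoly.roots.map fun μ => y - μ ^ k).prod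
      = (-1 : ℂ) ^ n * (A.charpoly.roots.map fun μ => μ ^ k - y).prod := by
    have := mprodNeg A.charpoly.roots (fun μ => μ ^ k - y)
    simp only [neg_sub] at this
    rw [this, cardRootsCharpoly]
  rw [h5]
  rw [Fintype.card_fin]
  have e : ((-1:ℂ)^n)^k * ((-1)^k)^n = 1 := by
    rw [← pow_mul, ← pow_mul, mul_comm n k, ← pow_add, Even.neg_one_pow (Even.add_self _)]
  rw [← mul_assoc (((-1:ℂ)^n)^k), e, one_mul]

private lemma tracePow {n : ℕ} (A : Matrix (Fin n) (Fin n) ℂ) {k : ℕ} (hk : k ≠ 0) :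
    (A ^ k).trace = (A.charpoly.roots.map (· ^ k)).sum := by
  have hcp : (A ^ k).charpoly = ((A.charpoly.roots.map (· ^ k)).map fun z => X - C z).prod := by
    apply Polynomial.funext
    intro y
    rw [charpolyEval, detPowSubScalar A hk, Polynomial.eval_multiset_prod,
      Multiset.map_map, Multiset.map_map]
    simp
  rw [Matrix.trace_eq_sum_roots_charpoly, hcp, Polynomial.roots_multiset_prod_X_sub_C]

private lemma cesaroGeom (w : ℂ) (hw : ‖w‖ ≤ 1) :
    Tendsto (fun K : ℕ => (K:ℂ)⁻¹ * ∑ k ∈ Finset.Icc 1 K, w ^ k) atTop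
      (𝓝 (if w = 1 then 1 else 0)) := by
  by_cases h1 : w = 1
  · subst h1
    rw [if_pos rfl]
    have h2 : ∀ᶠ K : ℕ in atTop,
        (1 : ℂ) = (K:ℂ)⁻¹ * ∑ k ∈ Finset.Icc 1 K, (1:ℂ) ^ k := by
      filter_upwards [eventually_gt_atTop 0] with K hK
      simp only [one_pow, Finset.sum_const, Nat.card_Icc, nsmul_eq_mul, mul_one,
        Nat.add_sub_cancel]
      exact (inv_mul_cancel₀ (Nat.cast_ne_zero.2 hK.ne' : (K:ℂ) ≠ 0)).symm
    exact Tendsto.congr' h2 tendsto_const_nhds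
  · rw [if_neg h1]
    have hsum : ∀ K : ℕ, ∑ k ∈ Finset.Icc 1 K, w ^ k
        = (w ^ (K + 1) - 1) / (w - 1) - 1 := by
      intro K
      rw [← Finset.Ico_add_one_right_eq_Icc,
        Finset.sum_Ico_eq_sub _ (Nat.one_le_iff_ne_zero.2 (Nat.succ_ne_zero K) : 1 ≤ K + 1)]
      rw [geom_sum_eq h1, Finset.range_one, Finset.sum_singleton, pow_zero]
    have hb : ∀ K : ℕ, ‖(K:ℂ)⁻¹ * ∑ k ∈ Finset.Icc 1 K, w ^ k‖
        ≤ (K:ℝ)⁻¹ * (2 / ‖w - 1‖ + 1) := by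
      intro K
      rw [norm_mul, norm_inv, Complex.norm_natCast]
      apply mul_le_mul_of_nonneg_left _ (by positivity)
      rw [hsum K]
      calc ‖(w ^ (K + 1) - 1) / (w - 1) - 1‖
          ≤ ‖(w ^ (K + 1) - 1) / (w - 1)‖ + 1 := by
            simpa using norm_sub_le ((w ^ (K + 1) - 1) / (w - 1)) 1
        _ ≤ 2 / ‖w - 1‖ + 1 := by
            gcongr
            rw [norm_div]
            gcongr
            calc ‖w ^ (K + 1) - 1‖ ≤ ‖w ^ (K+1)‖ + 1 := by
                  simpa using norm_sub_le (w ^ (K+1)) 1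
              _ ≤ 2 := by
                  rw [norm_pow]
                  have := pow_le_one₀ (norm_nonneg w) hw (n := K + 1)
                  linarith
    have hlim : Tendsto (fun K : ℕ => (K:ℝ)⁻¹ * (2 / ‖w - 1‖ + 1)) atTop (𝓝 0) := by
      simpa using (tendsto_inv_atTop_nhds_zero_nat (𝕜 := ℝ)).mul_const (2 / ‖w - 1‖ + 1)
    exact squeeze_zero_norm hb hlim

private lemma powerSumBound {m : ℕ} (u : Fin m → ℂ) (C : ℝ)
    (h : ∀ k : ℕ, k ≠ 0 → ‖∑ i, u i ^ k‖ ≤ C) : ∀ i, ‖u i‖ ≤ 1 := by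
  by_contra hcon
  push_neg at hcon
  obtain ⟨i₀, hi₀⟩ := hcon
  obtain ⟨j, -, hj⟩ := Finset.exists_max_image Finset.univ (fun i => ‖u i‖)
    ⟨i₀, Finset.mem_univ _⟩
  set ρ : ℝ := ‖u j‖ with hρdef
  have hρ : 1 < ρ := lt_of_lt_of_le hi₀ (hj i₀ (Finset.mem_univ _))
  have hρ0 : (0:ℝ) < ρ := lt_trans one_pos hρ
  have hC0 : 0 ≤ C := le_trans (norm_nonneg _) (h 1 one_ne_zero)
  set w : Fin m → Fin m → ℂ := fun a b => (u a * (starRingEnd ℂ) (u b)) / (ρ:ℂ)^2 with hw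
  have hwnorm : ∀ a b, ‖w a b‖ ≤ 1 := by
    intro a b
    rw [hw]
    simp only [norm_div, norm_mul, RingHomIsometric.norm_map, norm_pow, Complex.norm_real,
      Real.norm_eq_abs, abs_of_pos hρ0]
    rw [div_le_one (by positivity)]
    calc ‖u a‖ * ‖u b‖
        ≤ ρ * ρ := mul_le_mul (hj a (Finset.mem_univ _)) (hj b (Finset.mem_univ _))
          (norm_nonneg _) (le_of_lt hρ0)
      _ = ρ ^ 2 := (sq ρ).symm
  have hwjj : w j j = 1 := by
    rw [hw]
    simp only []
    rw [Complex.mul_conj]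
    have h1 : Complex.normSq (u j) = ρ ^ 2 := by
      rw [Complex.normSq_eq_norm_sq]
    rw [h1]
    push_cast
    exact div_self (pow_ne_zero 2 (Complex.ofReal_ne_zero.2 hρ0.ne'))
  set p : ℕ → ℂ := fun k => ∑ i, u i ^ k with hp
  set T : ℕ → ℂ := fun K =>
    (K : ℂ)⁻¹ * ∑ k ∈ Finset.Icc 1 K, (p k * (starRingEnd ℂ) (p k)) / ((ρ:ℂ)^2)^k with hT
  have hexp : ∀ K, T K = ∑ a, ∑ b, (K:ℂ)⁻¹ * ∑ k ∈ Finset.Icc 1 K, (w a b) ^ k := by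
    intro K
    have hterm : ∀ k : ℕ, (p k * (starRingEnd ℂ) (p k)) / ((ρ:ℂ)^2)^k
        = ∑ a, ∑ b, (w a b) ^ k := by
      intro k
      rw [hp]
      simp only [map_sum, map_pow]
      rw [Finset.sum_mul_sum]
      rw [Finset.sum_div]
      apply Finset.sum_congr rfl
      intro a _
      rw [Finset.sum_div]
      apply Finset.sum_congr rfl
      intro b _
      rw [hw]
      simp only []
      rw [div_pow, mul_pow]
    rw [hT]
    simp only [hterm]
    simp only [Finset.mul_sum]
    rw [Finset.sum_comm]
    apply Finset.sum_congr rfl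
    intro a _
    rw [Finset.sum_comm]
  have hN : Tendsto T atTop (𝓝 (∑ a, ∑ b, if w a b = 1 then (1:ℂ) else 0)) := by
    rw [tendsto_congr hexp]
    apply tendsto_finset_sum
    intro a _
    apply tendsto_finset_sum
    intro b _
    exact cesaroGeom _ (hwnorm a b)
  set x : ℝ := (ρ^2)⁻¹ with hx
  have hx0 : 0 ≤ x := by positivity
  have hx1 : x < 1 := by
    rw [hx, inv_lt_one_iff₀]
    right
    nlinarith
  have hzero : Tendsto T atTop (𝓝 0) := by
    have hbnd : ∀ K : ℕ, ‖T K‖ ≤ (K:ℝ)⁻¹ * (C^2 * (1 - x)⁻¹) := by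
      intro K
      rw [hT]
      simp only []
      rw [norm_mul, norm_inv, Complex.norm_natCast]
      apply mul_le_mul_of_nonneg_left _ (by positivity)
      calc ‖∑ k ∈ Finset.Icc 1 K, (p k * (starRingEnd ℂ) (p k)) / ((ρ:ℂ)^2)^k‖
          ≤ ∑ k ∈ Finset.Icc 1 K, ‖(p k * (starRingEnd ℂ) (p k)) / ((ρ:ℂ)^2)^k‖ :=
            norm_sum_le _ _
        _ ≤ ∑ k ∈ Finset.Icc 1 K, C^2 * x ^ k := by
            apply Finset.sum_le_sum
            intro k hk
            obtain ⟨hk1, -⟩ := Finset.mem_Icc.1 hk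
            rw [norm_div, norm_mul, RingHomIsometric.norm_map, norm_pow, norm_pow,
              Complex.norm_real, Real.norm_eq_abs, abs_of_pos hρ0]
            rw [hx, div_eq_mul_inv, ← inv_pow, mul_comm (C^2), mul_comm (‖p k‖ * ‖p k‖)]
            apply mul_le_mul_of_nonneg_left _ (by positivity)
            have hpk : ‖p k‖ ≤ C := h k (Nat.one_le_iff_ne_zero.1 hk1)
            calc ‖p k‖ * ‖p k‖ ≤ C * C :=
                mul_le_mul hpk hpk (norm_nonneg _) hC0
              _ = C ^ 2 := (sq C).symm
        _ = C^2 * ∑ k ∈ Finset.Icc 1 K, x ^ k := by rw [Finset.mul_sum]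
        _ ≤ C^2 * (1 - x)⁻¹ := by
            apply mul_le_mul_of_nonneg_left _ (by positivity)
            calc ∑ k ∈ Finset.Icc 1 K, x ^ k ≤ ∑' k : ℕ, x ^ k :=
                (summable_geometric_of_lt_one hx0 hx1).sum_le_tsum _
                  (fun k _ => by positivity)
              _ = (1 - x)⁻¹ := tsum_geometric_of_lt_one hx0 hx1
    exact squeeze_zero_norm hbnd
      (by simpa using (tendsto_inv_atTop_nhds_zero_nat (𝕜 := ℝ)).mul_const (C^2 * (1 - x)⁻¹))
  have hcontra := tendsto_nhds_unique hN hzero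
  have hre : (∑ a, ∑ b, if w a b = 1 then (1:ℂ) else 0).re
      = ∑ a, ∑ b, (if w a b = 1 then (1:ℝ) else 0) := by
    rw [Complex.re_sum]
    apply Finset.sum_congr rfl
    intro a _
    rw [Complex.re_sum]
    apply Finset.sum_congr rfl
    intro b _
    by_cases hab : w a b = 1 <;> simp [hab]
  have hge : (1:ℝ) ≤ ∑ a, ∑ b, (if w a b = 1 then (1:ℝ) else 0) := by
    have h1 : (1:ℝ) ≤ ∑ b, (if w j b = 1 then (1:ℝ) else 0) := by
      have := Finset.single_le_sum (f := fun b => if w j b = 1 then (1:ℝ) else 0)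
        (fun b _ => by positivity) (Finset.mem_univ j)
      simpa [hwjj] using this
    calc (1:ℝ) ≤ ∑ b, (if w j b = 1 then (1:ℝ) else 0) := h1
      _ ≤ ∑ a, ∑ b, (if w a b = 1 then (1:ℝ) else 0) :=
        Finset.single_le_sum (f := fun a => ∑ b, (if w a b = 1 then (1:ℝ) else 0))
          (fun a _ => Finset.sum_nonneg fun b _ => by positivity) (Finset.mem_univ j)
  rw [hcontra] at hre
  simp only [Complex.zero_re] at hre
  rw [← hre] at hge
  linarith

private lemma multisetToFn (s : Multiset ℂ) : ∃ (m : ℕ) (u : Fin m → ℂ),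
    (∀ f : ℂ → ℂ, (s.map f).sum = ∑ i, f (u i)) ∧ ∀ μ ∈ s, ∃ i, u i = μ := by
  refine ⟨s.toList.length, s.toList.get, fun f => ?_, fun μ hμ => ?_⟩
  · conv_lhs => rw [← Multiset.coe_toList s]
    rw [Multiset.map_coe, Multiset.sum_coe, ← List.ofFn_getElem_eq_map, List.sum_ofFn]
    rfl
  · exact List.mem_iff_get.1 (Multiset.mem_toList.2 hμ)

private lemma diffPowEntry {n : ℕ} (Φ : ℂ → Matrix (Fin n) (Fin n) ℂ)
    (hol : ∀ i j : Fin n, DifferentiableOn ℂ (fun ζ => Φ ζ i j) (ball (0 : ℂ) 1)) (k : ℕ) :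
    ∀ i j : Fin n, DifferentiableOn ℂ (fun ζ => (Φ ζ ^ k) i j) (ball (0 : ℂ) 1) := by
  induction k with
  | zero =>
    intro i j
    simp only [pow_zero]
    by_cases h : i = j <;> simp [Matrix.one_apply, h]
  | succ k ih =>
    intro i j
    have : (fun ζ => (Φ ζ ^ (k+1)) i j) = fun ζ => ∑ l, (Φ ζ ^ k) i l * Φ ζ l j := by
      funext ζ
      rw [pow_succ, Matrix.mul_apply]
    rw [this]
    exact DifferentiableOn.fun_sum fun l _ => (ih i l).mul (hol l j)

private lemma diffTracePow {n : ℕ} (Φ : ℂ → Matrix (Fin n) (Fin n) ℂ)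
    (hol : ∀ i j : Fin n, DifferentiableOn ℂ (fun ζ => Φ ζ i j) (ball (0 : ℂ) 1)) (k : ℕ) :
    DifferentiableOn ℂ (fun ζ => (Φ ζ ^ k).trace) (ball (0 : ℂ) 1) := by
  have : (fun ζ => (Φ ζ ^ k).trace) = fun ζ => ∑ i, (Φ ζ ^ k) i i := by
    funext ζ; rw [Matrix.trace]; rfl
  rw [this]
  exact DifferentiableOn.fun_sum fun i _ => diffPowEntry Φ hol k i i

end Auxiliary

/-- The spectral radius of a complex `n × n` matrix. -/
noncomputable def sRad {n : ℕ} (A : Matrix (Fin n) (Fin n) ℂ) : ℝ :=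
  sSup ((fun μ => ‖μ‖) '' spectrum ℂ A)

private lemma normLeSRad {n : ℕ} {A : Matrix (Fin n) (Fin n) ℂ} {μ : ℂ}
    (hμ : μ ∈ spectrum ℂ A) : ‖μ‖ ≤ sRad A :=
  le_csSup (((spectrumFinite A).image _).bddAbove) (Set.mem_image_of_mem _ hμ)

open Filter Topology in
/-- If `Φ : 𝔻 → M_n(ℂ)` is holomorphic and `r(Φ(ζ)) < 1/R` whenever `|ζ| = R ∈ (0,1)`,
then `r(Φ(ζ)) ≤ 1` on all of `𝔻`. -/
theorem stmt7 {n : ℕ} (Φ : ℂ → Matrix (Fin n) (Fin n) ℂ)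
    (hol : ∀ i j : Fin n, DifferentiableOn ℂ (fun ζ => Φ ζ i j) (ball (0 : ℂ) 1))
    (hbd : ∀ R : ℝ, 0 < R → R < 1 → ∀ ζ : ℂ, ‖ζ‖ = R → sRad (Φ ζ) < 1 / R) :
    ∀ ζ ∈ ball (0 : ℂ) 1, sRad (Φ ζ) ≤ 1 := by
  intro ζ₀ hζ₀
  have hζ₀n : ‖ζ₀‖ < 1 := by simpa [mem_ball, dist_eq_norm] using hζ₀
  -- the trace of `Φ ζ₀ ^ k` is bounded by `n`
  have key : ∀ k : ℕ, k ≠ 0 → ‖(Φ ζ₀ ^ k).trace‖ ≤ (n : ℝ) := by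
    intro k hk
    have hstep : ∀ R : ℝ, ‖ζ₀‖ < R → R < 1 → ‖(Φ ζ₀ ^ k).trace‖ ≤ (n : ℝ) * (1/R)^k := by
      intro R hR0 hR1
      have hRpos : 0 < R := lt_of_le_of_lt (norm_nonneg ζ₀) hR0
      refine Complex.norm_le_of_forall_mem_frontier_norm_le (U := ball (0:ℂ) R)
        (f := fun ζ => (Φ ζ ^ k).trace) (z := ζ₀) isBounded_ball ?_ ?_ ?_
      · -- DiffContOnCl
        apply DifferentiableOn.diffContOnCl
        apply (diffTracePow Φ hol k).mono
        rw [closure_ball (0:ℂ) hRpos.ne']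
        intro z hz
        rw [mem_closedBall, dist_zero_right] at hz
        rw [mem_ball, dist_zero_right]
        exact lt_of_le_of_lt hz hR1
      · -- boundary bound
        intro z hz
        rw [frontier_ball (0:ℂ) hRpos.ne'] at hz
        have hzn : ‖z‖ = R := by simpa [mem_sphere, dist_zero_right] using hz
        have hsr : sRad (Φ z) < 1 / R := hbd R hRpos hR1 z hzn
        show ‖(Φ z ^ k).trace‖ ≤ (n:ℝ) * (1/R)^k
        rw [tracePow (Φ z) hk]
        calc ‖((Φ z).charpoly.roots.map (· ^ k)).sum‖
            ≤ (((Φ z).charpoly.roots.map (· ^ k)).map fun μ => ‖μ‖).sum :=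
              norm_multiset_sum_le _
          _ = ((Φ z).charpoly.roots.map fun μ => ‖μ‖ ^ k).sum := by
              rw [Multiset.map_map]
              simp [Function.comp, norm_pow]
          _ ≤ ((Φ z).charpoly.roots.map fun _ => (1/R)^k).sum := by
              apply Multiset.sum_map_le_sum_map
              intro μ hμ
              have hμs : μ ∈ spectrum ℂ (Φ z) := (memSpectrumIffRoot (Φ z) μ).2 hμ
              exact pow_le_pow_left₀ (norm_nonneg μ) (le_of_lt
                (lt_of_le_of_lt (normLeSRad hμs) hsr)) k
          _ = (n : ℝ) * (1/R)^k := by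
              rw [Multiset.map_const', Multiset.sum_replicate, cardRootsCharpoly,
                nsmul_eq_mul]
      · -- ζ₀ in closure
        apply subset_closure
        rw [mem_ball, dist_zero_right]
        exact hR0
    have hlim : Tendsto (fun R : ℝ => (n:ℝ) * (1/R)^k) (𝓝[<] (1:ℝ)) (𝓝 ((n:ℝ))) := by
      have hc : ContinuousAt (fun R : ℝ => (n:ℝ) * (1/R)^k) 1 := by
        apply ContinuousAt.mul continuousAt_const
        apply ContinuousAt.pow
        exact ContinuousAt.div continuousAt_const continuousAt_id one_ne_zero
      have h2 := hc.tendsto.mono_left (nhdsWithin_le_nhds (s := Set.Iio (1:ℝ)))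
      simpa using h2
    apply ge_of_tendsto hlim
    filter_upwards [Ioo_mem_nhdsLT_of_mem (Set.mem_Ioc.2 ⟨hζ₀n, le_refl (1:ℝ)⟩)] with R hR
    exact hstep R hR.1 hR.2
  -- conclude via the power-sum bound
  obtain ⟨m, u, hsum, hmem⟩ := multisetToFn (Φ ζ₀).charpoly.roots
  have hub : ∀ i, ‖u i‖ ≤ 1 := by
    apply powerSumBound u (n : ℝ)
    intro k hk
    rw [← hsum (· ^ k), ← tracePow (Φ ζ₀) hk]
    exact key k hk
  apply Real.sSup_le _ zero_le_one
  rintro x ⟨μ, hμ, rfl⟩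
  obtain ⟨i, rfl⟩ := hmem μ ((memSpectrumIffRoot (Φ ζ₀) μ).1 hμ)
  exact hub i
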